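/- The T-sum-lift characterization fails when restricted to quadratic forms and invertible linear maps. Concretely, for the path-complete graphs G₁ and G₂ the following both hold: (a) for every n ≥ 1, every pair of invertible matrices A₁, A₂ ∈ GL(n, ℝ), every γ > 0, and every pair of positive-definite quadratic forms V_b, V_c on ℝⁿ satisfying V_b(x) ≥ γ V_b(A₁ x), V_b(x) ≥ γ V_c(A₂ x), V_c(x) ≥ γ V_c(A₂ x) and V_c(x) ≥ γ V_b(A₁ x) for all x ∈ ℝⁿ (the inequalities of G₁), there exist positive-definite quadratic forms V_{b'}, V_{c'} on ℝⁿ satisfying V_{b'}(x) ≥ γ V_{b'}(A₁ x), V_{b'}(x) ≥ γ V_{c'}(A₁ x), V_{c'}(x) ≥ γ V_{c'}(A₂ x) and V_{c'}(x) ≥ γ V_{b'}(A₂ x) for all x ∈ ℝⁿ (the inequalities of G₂); yet (b) the sum lift G₁^⊕ does not simulate G₂. -/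

import Mathlib

open Filter

/-- A labeled digraph on node type `S` with alphabet `A`, given by its edge set,
is path-complete if every nonempty word is the label sequence of some path. -/
def PathComplete {S A : Type*} (E : Set (S × S × A)) : Prop :=
  ∀ w : List A, w ≠ [] → ∃ s : Fin (w.length + 1) → S,
    ∀ j : Fin w.length, (s j.castSucc, s j.succ, w.get j) ∈ E

/-- `G₁` (edge set `E₁`) simulates `G₂` (edge set `E₂`). -/
def Simulates {S₁ S₂ A : Type*} (E₁ : Set (S₁ × S₁ × A)) (E₂ : Set (S₂ × S₂ × A)) : Prop :=
  ∃ R : S₂ → S₁, ∀ a b i, (a, b, i) ∈ E₂ → (R a, R b, i) ∈ E₁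

/-- Simulation where the simulating graph has node set `V₁` inside ambient type `N₁`. -/
def SimulatesOn {N₁ N₂ A : Type*} (V₁ : Set N₁) (E₁ : Set (N₁ × N₁ × A))
    (E₂ : Set (N₂ × N₂ × A)) : Prop :=
  ∃ R : N₂ → N₁, (∀ s, R s ∈ V₁) ∧ ∀ a b i, (a, b, i) ∈ E₂ → (R a, R b, i) ∈ E₁

/-- Class K∞ function. -/
def IsKInfty (α : ℝ → ℝ) : Prop :=
  Continuous α ∧ StrictMono α ∧ α 0 = 0 ∧ Tendsto α atTop atTop

/-- Membership in `Lyap₀(ℝⁿ)`. -/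
def IsLyap {n : ℕ} (V : EuclideanSpace ℝ (Fin n) → ℝ) : Prop :=
  Continuous V ∧ V 0 = 0 ∧ (∀ x, x ≠ 0 → 0 < V x) ∧
  ∃ α₁ α₂ : ℝ → ℝ, IsKInfty α₁ ∧ IsKInfty α₂ ∧ ∀ x, α₁ ‖x‖ ≤ V x ∧ V x ≤ α₂ ‖x‖

/-- `(V_s)_{s}` together with `γ` is admissible for the graph with edge set `E`
and the switched maps `f`. -/
def Admissible {S A : Type*} {n : ℕ} (E : Set (S × S × A))
    (f : A → EuclideanSpace ℝ (Fin n) → EuclideanSpace ℝ (Fin n))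
    (V : S → EuclideanSpace ℝ (Fin n) → ℝ) (γ : ℝ) : Prop :=
  ∀ a b i, (a, b, i) ∈ E → ∀ x, V a x ≥ γ * V b (f i x)

/-- Edge set of the `T`-sum lift: nodes are multisets of size `T`. -/
def sumLiftEdgesT {S A : Type*} (E : Set (S × S × A)) (T : ℕ) :
    Set (Multiset S × Multiset S × A) :=
  { e | ∃ L : List (S × S), L.length = T ∧ (∀ p ∈ L, (p.1, p.2, e.2.2) ∈ E) ∧
      e.1 = ↑(L.map Prod.fst) ∧ e.2.1 = ↑(L.map Prod.snd) }

/-- Edge set of the sum lift `G^⊕` (union over all `T ≥ 1`). -/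
def sumLiftEdges {S A : Type*} (E : Set (S × S × A)) : Set (Multiset S × Multiset S × A) :=
  ⋃ T ∈ Set.Ici 1, sumLiftEdgesT E T

/-- Edge set of the `T`-forward composition lift `G^{∘T}`; a word `(j₁, …, j_T)` is
encoded as the list `[j₁, …, j_T]`.  For `T = 0` this is `G` itself (with empty words). -/
def fwdLiftEdges {S A : Type*} (E : Set (S × S × A)) :
    ℕ → Set ((S × List A) × (S × List A) × A)
  | 0 => { e | ∃ (a b : S) (i : A), (a, b, i) ∈ E ∧ e = ((a, []), (b, []), i) }
  | T + 1 => { e | ∃ (a b : S) (i : A) (l : List A) (jT : A), (a, b, i) ∈ E ∧ l.length = T ∧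
      e = ((a, l ++ [jT]), (b, i :: l), jT) }

/-- Edge set of the `T`-backward composition lift `G^{∘-T}`. -/
def bwdLiftEdges {S A : Type*} (E : Set (S × S × A)) :
    ℕ → Set ((S × List A) × (S × List A) × A)
  | 0 => { e | ∃ (a b : S) (i : A), (a, b, i) ∈ E ∧ e = ((a, []), (b, []), i) }
  | T + 1 => { e | ∃ (a b : S) (i : A) (l : List A) (jT : A), (a, b, i) ∈ E ∧ l.length = T ∧
      e = ((a, i :: l), (b, l ++ [jT]), jT) }

/-- The underlying undirected graph on node set `V` with labeled edge set `E` is connected. -/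
def ConnectedOn {N A : Type*} (V : Set N) (E : Set (N × N × A)) : Prop :=
  ∀ x ∈ V, ∀ y ∈ V,
    Relation.ReflTransGen (fun u v => ∃ i, (u, v, i) ∈ E ∨ (v, u, i) ∈ E) x y

/-- Transpose of a labeled digraph (reverse all edges). -/
def transposeEdges {S A : Type*} (E : Set (S × S × A)) : Set (S × S × A) :=
  { e | (e.2.1, e.1, e.2.2) ∈ E }

/-- Strong connectedness of a labeled digraph. -/
def StronglyConnectedEdges {S A : Type*} (E : Set (S × S × A)) : Prop :=
  ∀ x y : S, Relation.ReflTransGen (fun u v => ∃ i, (u, v, i) ∈ E) x y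

/-- Graph `G₁` from Example 3.9: nodes `b = 0`, `c = 1`; labels `1 = 0`, `2 = 1`. -/
def G1edges : Set (Fin 2 × Fin 2 × Fin 2) :=
  {(0, 0, 0), (0, 1, 1), (1, 1, 1), (1, 0, 0)}

/-- Graph `G₂` from Example 3.9: nodes `b' = 0`, `c' = 1`; labels `1 = 0`, `2 = 1`. -/
def G2edges : Set (Fin 2 × Fin 2 × Fin 2) :=
  {(0, 0, 0), (0, 1, 0), (1, 1, 1), (1, 0, 1)}

/-- The quadratic form `x ↦ xᵀ P x`. -/
def quadForm {n : ℕ} (P : Matrix (Fin n) (Fin n) ℝ) (x : Fin n → ℝ) : ℝ :=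
  dotProduct x (P.mulVec x)


open Matrix in
lemma quadForm_conj {n : ℕ} (P A : Matrix (Fin n) (Fin n) ℝ) (x : Fin n → ℝ) :
    quadForm (Aᵀ * P * A) x = quadForm P (A.mulVec x) := by
  unfold quadForm
  rw [← Matrix.mulVec_mulVec, ← Matrix.mulVec_mulVec, Matrix.dotProduct_mulVec,
    Matrix.vecMul_transpose]

lemma quadForm_smul {n : ℕ} (γ : ℝ) (P : Matrix (Fin n) (Fin n) ℝ) (x : Fin n → ℝ) :
    quadForm (γ • P) x = γ * quadForm P x := by
  unfold quadForm
  rw [Matrix.smul_mulVec, dotProduct_smul, smul_eq_mul]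

open Matrix in
lemma posDef_conj {n : ℕ} {P A : Matrix (Fin n) (Fin n) ℝ} (hP : P.PosDef) (hA : IsUnit A) :
    (Aᵀ * P * A).PosDef := by
  refine Matrix.PosDef.of_dotProduct_mulVec_pos ?_ ?_
  · rw [← Matrix.conjTranspose_eq_transpose_of_trivial]
    exact Matrix.isHermitian_conjTranspose_mul_mul A hP.1
  · intro x hx
    have hAx : A.mulVec x ≠ 0 := by
      intro h
      exact hx (Matrix.mulVec_injective_iff_isUnit.mpr hA
        (h.trans (Matrix.mulVec_zero A).symm))
    have h2 := hP.dotProduct_mulVec_pos hAx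
    have hq : 0 < quadForm (Aᵀ * P * A) x := by
      rw [quadForm_conj]
      simpa [star_trivial, quadForm] using h2
    simpa [star_trivial, quadForm] using hq

lemma posDef_smul {n : ℕ} {γ : ℝ} (hγ : 0 < γ) {P : Matrix (Fin n) (Fin n) ℝ}
    (hP : P.PosDef) : (γ • P).PosDef := by
  refine Matrix.PosDef.of_dotProduct_mulVec_pos ?_ ?_
  · show (γ • P).conjTranspose = γ • P
    rw [Matrix.conjTranspose_smul, star_trivial, hP.1]
  · intro x hx
    have := hP.dotProduct_mulVec_pos hx
    simp only [Matrix.smul_mulVec, dotProduct_smul, smul_eq_mul]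
    exact mul_pos hγ this

lemma G1_label0 {a b : Fin 2} (h : (a, b, (0 : Fin 2)) ∈ G1edges) : b = 0 := by
  simp only [G1edges, Set.mem_insert_iff, Set.mem_singleton_iff, Prod.mk.injEq] at h
  rcases h with ⟨h1, h2, h3⟩ | ⟨h1, h2, h3⟩ | ⟨h1, h2, h3⟩ | ⟨h1, h2, h3⟩ <;>
    first | exact h2 | exact absurd h3 (by decide)

lemma G1_label1 {a b : Fin 2} (h : (a, b, (1 : Fin 2)) ∈ G1edges) : b = 1 := by
  simp only [G1edges, Set.mem_insert_iff, Set.mem_singleton_iff, Prod.mk.injEq] at h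
  rcases h with ⟨h1, h2, h3⟩ | ⟨h1, h2, h3⟩ | ⟨h1, h2, h3⟩ | ⟨h1, h2, h3⟩ <;>
    first | exact h2 | exact absurd h3 (by decide)

lemma sumLift_dest {R1 R2 : Multiset (Fin 2)} {i : Fin 2}
    (h : (R1, R2, i) ∈ sumLiftEdges G1edges) :
    ∀ a ∈ R2, ∃ p : Fin 2 × Fin 2, (p.1, a, i) ∈ G1edges := by
  intro a ha
  simp only [sumLiftEdges, Set.mem_iUnion] at h
  obtain ⟨T, hT, L, hlen, hall, h1, h2⟩ := h
  have h2' : R2 = ↑(L.map Prod.snd) := h2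
  have hall' : ∀ p ∈ L, (p.1, p.2, i) ∈ G1edges := hall
  rw [h2', Multiset.mem_coe, List.mem_map] at ha
  obtain ⟨p, hp, hpa⟩ := ha
  exact ⟨p, hpa ▸ hall' p hp⟩

/-- Corollary: quadratic forms cannot be ordered through a sum lift.
(a) `G₁ ≤ G₂` holds for the template of positive-definite quadratic forms and invertible
linear maps, yet (b) the sum lift `G₁^⊕` does not simulate `G₂`. -/
theorem sum_lift_fails_for_quadratics :
    (∀ n : ℕ, 1 ≤ n → ∀ A₁ A₂ : Matrix (Fin n) (Fin n) ℝ, IsUnit A₁ → IsUnit A₂ →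
      ∀ γ : ℝ, 0 < γ →
      ∀ Pb Pc : Matrix (Fin n) (Fin n) ℝ, Pb.PosDef → Pc.PosDef →
      (∀ x, quadForm Pb x ≥ γ * quadForm Pb (A₁.mulVec x)) →
      (∀ x, quadForm Pb x ≥ γ * quadForm Pc (A₂.mulVec x)) →
      (∀ x, quadForm Pc x ≥ γ * quadForm Pc (A₂.mulVec x)) →
      (∀ x, quadForm Pc x ≥ γ * quadForm Pb (A₁.mulVec x)) →
      ∃ Pb' Pc' : Matrix (Fin n) (Fin n) ℝ, Pb'.PosDef ∧ Pc'.PosDef ∧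
        (∀ x, quadForm Pb' x ≥ γ * quadForm Pb' (A₁.mulVec x)) ∧
        (∀ x, quadForm Pb' x ≥ γ * quadForm Pc' (A₁.mulVec x)) ∧
        (∀ x, quadForm Pc' x ≥ γ * quadForm Pc' (A₂.mulVec x)) ∧
        (∀ x, quadForm Pc' x ≥ γ * quadForm Pb' (A₂.mulVec x))) ∧
    ¬ SimulatesOn {M : Multiset (Fin 2) | M ≠ 0} (sumLiftEdges G1edges) G2edges := by
  constructor
  · intro n hn A₁ A₂ hA₁ hA₂ γ hγ Pb Pc hPb hPc h1 h2 h3 h4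
    refine ⟨γ • (A₁.transpose * Pb * A₁), γ • (A₂.transpose * Pc * A₂),
      posDef_smul hγ (posDef_conj hPb hA₁), posDef_smul hγ (posDef_conj hPc hA₂),
      ?_, ?_, ?_, ?_⟩ <;> intro x <;>
      simp only [quadForm_smul, quadForm_conj, Matrix.mulVec_mulVec] <;>
      rw [ge_iff_le, mul_le_mul_iff_right₀ hγ] <;>
      simp only [← Matrix.mulVec_mulVec]
    · exact h1 (A₁.mulVec x)
    · exact h2 (A₁.mulVec x)
    · exact h3 (A₂.mulVec x)
    · exact h4 (A₂.mulVec x)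
  · rintro ⟨R, hV, hE⟩
    have h10 : ((0 : Fin 2), (1 : Fin 2), (0 : Fin 2)) ∈ G2edges := by
      simp [G2edges]
    have h11 : ((1 : Fin 2), (1 : Fin 2), (1 : Fin 2)) ∈ G2edges := by
      simp [G2edges]
    have e10 := hE 0 1 0 h10
    have e11 := hE 1 1 1 h11
    obtain ⟨a, ha⟩ := Multiset.exists_mem_of_ne_zero (hV 1)
    obtain ⟨p, hp⟩ := sumLift_dest e10 a ha
    obtain ⟨q, hq⟩ := sumLift_dest e11 a ha
    have hz := G1_label0 hp
    have ho := G1_label1 hq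
    rw [hz] at ho
    exact absurd ho (by decide)
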